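/- Let 1 → H → G → Q → 1 be an extension of countable discrete groups with proper length functions. If H and Q are both strongly embeddable, then G is strongly embeddable. -/

import Mathlib

open Metric Filter
noncomputable section

/-- The metric on a group is left-invariant. -/
def LeftInvariantMetric (G : Type*) [Group G] [MetricSpace G] : Prop :=
  ∀ g a b : G, dist (g * a) (g * b) = dist a b

/-- The metric is proper: closed balls are finite. -/
def ProperMetric (G : Type*) [MetricSpace G] : Prop :=
  ∀ (x : G) (r : ℝ), (Metric.closedBall x r).Finite

/-- `X` is strongly embeddable: for all `R, ε > 0` there is a unit-norm map
`β : X → ℓ²(X)` with `‖β x - β y‖ ≤ ε` when `dist x y ≤ R`, and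
`lim_{S→∞} sup_x Σ_{w ∉ B_S(x)} |β x w|² = 0`. -/
def StronglyEmbeddable (X : Type*) [MetricSpace X] : Prop :=
  ∀ R > (0:ℝ), ∀ ε > (0:ℝ), ∃ β : X → lp (fun _ : X => ℝ) 2,
    (∀ x : X, ‖β x‖ = 1) ∧
    (∀ x y : X, dist x y ≤ R → ‖β x - β y‖ ≤ ε) ∧
    (∀ δ > (0:ℝ), ∃ S : ℝ, ∀ x : X,
      (∑' w : {w : X // S < dist x w}, (β x w.1) ^ 2) ≤ δ)

open scoped ENNReal

section helpers
attribute [local instance] Classical.propDecidable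

section helpers
attribute [local instance] Classical.propDecidable

lemma SE_lp_sq_summable {I : Type*} (v : lp (fun _ : I => ℝ) 2) :
    Summable (fun i => (v i : ℝ)^2) := by
  have h := (lp.memℓp v).summable (p := 2) (by norm_num)
  have : (fun i => ‖(v : ∀ _ : I, ℝ) i‖ ^ ((2:ℝ≥0∞).toReal)) = fun i => (v i : ℝ)^2 := by
    funext i
    rw [ENNReal.toReal_ofNat, show ((2:ℝ)) = ((2:ℕ):ℝ) by norm_num, Real.rpow_natCast,
      Real.norm_eq_abs, sq_abs]
  rwa [this] at h

lemma SE_lp_norm_sq {I : Type*} (v : lp (fun _ : I => ℝ) 2) :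
    ‖v‖^2 = ∑' i, (v i : ℝ)^2 := by
  have h := lp.norm_rpow_eq_tsum (p := 2) (by norm_num) v
  have h2 : ∀ a : ℝ, a ^ ((2:ℝ≥0∞).toReal) = a ^ 2 := fun a => by
    rw [ENNReal.toReal_ofNat, show ((2:ℝ)) = ((2:ℕ):ℝ) by norm_num, Real.rpow_natCast]
  rw [h2] at h
  rw [h]
  congr 1; funext i; rw [h2, Real.norm_eq_abs, sq_abs]

lemma SE_le_of_sq_le_sq {a b : ℝ} (ha : 0 ≤ a) (hb : 0 ≤ b) (h : a^2 ≤ b^2) : a ≤ b := by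
  nlinarith

lemma SE_tsum_subtype_mono {ι : Type*} {f : ι → ℝ} (hf : ∀ i, 0 ≤ f i) (hs : Summable f)
    {s t : Set ι} (hst : s ⊆ t) :
    ∑' (i : s), f i ≤ ∑' (i : t), f i := by
  rw [tsum_subtype, tsum_subtype]
  exact Summable.tsum_le_tsum (Set.indicator_le_indicator_of_subset hst hf)
    (hs.indicator s) (hs.indicator t)

lemma SE_sum_le_tsum_subtype {ι : Type*} {f : ι → ℝ} (hf : ∀ i, 0 ≤ f i) (hs : Summable f)
    {s : Finset ι} {t : Set ι} (hst : ∀ i ∈ s, i ∈ t) :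
    ∑ i ∈ s, f i ≤ ∑' (i : t), f i := by
  rw [← Finset.tsum_subtype s f]
  exact SE_tsum_subtype_mono hf hs (fun i hi => hst i hi)

lemma SE_norm_normalize_sub {E : Type*} [NormedAddCommGroup E] [NormedSpace ℝ E]
    (u v : E) (hu : 0 < ‖u‖) (hv : 0 < ‖v‖) :
    ‖‖u‖⁻¹ • u - ‖v‖⁻¹ • v‖ ≤ 2 * ‖u - v‖ / ‖u‖ := by
  have key : ‖u‖⁻¹ • u - ‖v‖⁻¹ • v = ‖u‖⁻¹ • (u - v) + (‖u‖⁻¹ - ‖v‖⁻¹) • v := by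
    rw [smul_sub, sub_smul]; abel
  rw [key]
  have h1 : ‖‖u‖⁻¹ • (u - v)‖ = ‖u‖⁻¹ * ‖u - v‖ := by
    rw [norm_smul, Real.norm_eq_abs, abs_of_pos (by positivity)]
  have hab : |‖u‖ - ‖v‖| ≤ ‖u - v‖ := abs_norm_sub_norm_le u v
  have h3 : |‖u‖⁻¹ - ‖v‖⁻¹| * ‖v‖ = |‖u‖ - ‖v‖| * ‖u‖⁻¹ := by
    rw [show ‖u‖⁻¹ - ‖v‖⁻¹ = (‖v‖ - ‖u‖)/(‖u‖*‖v‖) by field_simp, abs_div,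
      abs_of_pos (mul_pos hu hv), abs_sub_comm]
    field_simp
  have h2 : ‖(‖u‖⁻¹ - ‖v‖⁻¹) • v‖ ≤ ‖u‖⁻¹ * ‖u - v‖ := by
    rw [norm_smul, Real.norm_eq_abs, h3]
    have : (0:ℝ) ≤ ‖u‖⁻¹ := by positivity
    nlinarith
  calc ‖_ + _‖ ≤ ‖‖u‖⁻¹ • (u - v)‖ + ‖(‖u‖⁻¹ - ‖v‖⁻¹) • v‖ := norm_add_le _ _
  _ ≤ ‖u‖⁻¹ * ‖u - v‖ + ‖u‖⁻¹ * ‖u - v‖ := by rw [h1]; linarith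
  _ = 2 * ‖u - v‖ / ‖u‖ := by field_simp; ring

end helpers


section grp

variable {G : Type} [Group G] [MetricSpace G] {H : Subgroup G} [H.Normal]
  [MetricSpace (G ⧸ H)]

variable (hleft : LeftInvariantMetric G) (hproper : ProperMetric G)
  (hq : ∀ a b : G, dist (QuotientGroup.mk a : G ⧸ H) (QuotientGroup.mk b) =
      sInf {r : ℝ | ∃ a' b' : G, (QuotientGroup.mk a' : G ⧸ H) = QuotientGroup.mk a ∧
        (QuotientGroup.mk b' : G ⧸ H) = QuotientGroup.mk b ∧ r = dist a' b'})

include hleft hproper hq in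
lemma SE_exists_min (a b : G) :
    ∃ c : G, (c : G ⧸ H) = (b : G ⧸ H) ∧ dist (a : G ⧸ H) (b : G ⧸ H) = dist a c ∧
      ∀ c' : G, (c' : G ⧸ H) = (b : G ⧸ H) → dist (a : G ⧸ H) (b : G ⧸ H) ≤ dist a c' := by
  classical
  have hVeq : {r : ℝ | ∃ a' b' : G, (a' : G ⧸ H) = (a : G ⧸ H) ∧ (b' : G ⧸ H) = (b : G ⧸ H) ∧
      r = dist a' b'} = {r | ∃ c : G, (c : G ⧸ H) = (b : G ⧸ H) ∧ r = dist a c} := by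
    ext r
    constructor
    · rintro ⟨a', b', ha, hb, rfl⟩
      have h₁ : a⁻¹ * a' ∈ H := QuotientGroup.eq.mp ha.symm
      have hk : a' * a⁻¹ ∈ H := by
        have h2 := Subgroup.Normal.conj_mem ‹H.Normal› _ h₁ a
        have : a * (a⁻¹ * a') * a⁻¹ = a' * a⁻¹ := by group
        rwa [this] at h2
      refine ⟨(a' * a⁻¹)⁻¹ * b', ?_, ?_⟩
      · have h1 : ((a' * a⁻¹ : G) : G ⧸ H) = 1 := (QuotientGroup.eq_one_iff _).mpr hk
        calc (((a' * a⁻¹)⁻¹ * b' : G) : G ⧸ H)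
            = ((a' * a⁻¹ : G) : G ⧸ H)⁻¹ * (b' : G ⧸ H) := by
              simp [QuotientGroup.mk_mul, QuotientGroup.mk_inv]
          _ = (b : G ⧸ H) := by rw [h1, hb]; simp
      · have h2 := hleft ((a' * a⁻¹)⁻¹) a' b'
        rw [show (a' * a⁻¹)⁻¹ * a' = a by group] at h2
        exact h2.symm
    · rintro ⟨c, hc, rfl⟩
      exact ⟨a, c, rfl, hc, rfl⟩
  -- attainment
  set W : Set ℝ := {r | ∃ c : G, (c : G ⧸ H) = (b : G ⧸ H) ∧ r = dist a c} with hW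
  let Cs : Set G := {c | (c : G ⧸ H) = (b : G ⧸ H) ∧ dist a c ≤ dist a b}
  have hCfin : Cs.Finite := by
    apply (hproper a (dist a b)).subset
    intro c hc
    rw [Metric.mem_closedBall, dist_comm]
    exact hc.2
  have hCb : b ∈ Cs := ⟨rfl, le_refl _⟩
  obtain ⟨c₀, hc₀mem, hc₀min⟩ := hCfin.toFinset.exists_min_image (fun c => dist a c)
    ⟨b, hCfin.mem_toFinset.mpr hCb⟩
  rw [hCfin.mem_toFinset] at hc₀mem
  have least : IsLeast W (dist a c₀) := by
    constructor
    · exact ⟨c₀, hc₀mem.1, rfl⟩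
    · rintro r ⟨c, hc, rfl⟩
      by_cases h : dist a c ≤ dist a b
      · exact hc₀min c (hCfin.mem_toFinset.mpr ⟨hc, h⟩)
      · exact le_trans hc₀mem.2 (le_of_not_ge h)
  have hd : dist (a : G ⧸ H) (b : G ⧸ H) = dist a c₀ := by
    rw [hq a b, hVeq]
    exact least.csInf_eq
  exact ⟨c₀, hc₀mem.1, hd, fun c' hc' => hd ▸ least.2 ⟨c', hc', rfl⟩⟩

include hleft hproper hq in
lemma SE_dist_mk_le (a b : G) : dist (a : G ⧸ H) (b : G ⧸ H) ≤ dist a b := by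
  obtain ⟨c, hc, hd, hmin⟩ := SE_exists_min hleft hproper hq a b
  exact hmin b rfl

include hleft hq in
lemma SE_distQ_mul (g a b : G) :
    dist ((g * a : G) : G ⧸ H) ((g * b : G) : G ⧸ H) = dist (a : G ⧸ H) (b : G ⧸ H) := by
  rw [hq (g*a) (g*b), hq a b]
  congr 1
  ext r
  constructor
  · rintro ⟨a', b', ha, hb, rfl⟩
    refine ⟨g⁻¹ * a', g⁻¹ * b', ?_, ?_, (hleft g⁻¹ a' b').symm⟩
    · rw [show ((g⁻¹ * a' : G) : G ⧸ H) = ((g⁻¹ : G) : G ⧸ H) * (a' : G ⧸ H) by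
        simp [QuotientGroup.mk_mul], ha]
      simp [QuotientGroup.mk_mul, QuotientGroup.mk_inv]
    · rw [show ((g⁻¹ * b' : G) : G ⧸ H) = ((g⁻¹ : G) : G ⧸ H) * (b' : G ⧸ H) by
        simp [QuotientGroup.mk_mul], hb]
      simp [QuotientGroup.mk_mul, QuotientGroup.mk_inv]
  · rintro ⟨a', b', ha, hb, rfl⟩
    refine ⟨g * a', g * b', ?_, ?_, (hleft g a' b').symm⟩
    · simp only [QuotientGroup.mk_mul, ha]
    · simp only [QuotientGroup.mk_mul, hb]

include hleft hq in
lemma SE_dist_aux (x : G) (q : G ⧸ H) :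
    dist (((Quotient.out q)⁻¹ * x : G) : G ⧸ H) (1 : G ⧸ H) = dist (x : G ⧸ H) q := by
  have h := SE_distQ_mul hleft hq (Quotient.out q) ((Quotient.out q)⁻¹ * x) 1
  rw [show Quotient.out q * ((Quotient.out q)⁻¹ * x) = x by group, mul_one,
    QuotientGroup.out_eq'] at h
  rw [QuotientGroup.mk_one] at h
  exact h.symm

include hleft hproper hq in
lemma SE_qball_finite (x : G) (S : ℝ) : {q : G ⧸ H | dist (x : G ⧸ H) q ≤ S}.Finite := by
  apply ((hproper x S).image (QuotientGroup.mk : G → G ⧸ H)).subset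
  intro q hqq
  obtain ⟨c, hc, hd, -⟩ := SE_exists_min hleft hproper hq x (Quotient.out q)
  rw [QuotientGroup.out_eq'] at hc hd
  refine ⟨c, ?_, hc⟩
  rw [Metric.mem_closedBall, dist_comm, ← hd]
  exact hqq

end grp

section fib

attribute [local instance] Classical.propDecidable
variable {G : Type} [Group G] [MetricSpace G] {H : Subgroup G} [H.Normal]
  [MetricSpace (G ⧸ H)]

variable (H) in
def SEsig (w : G) : ↥H :=
  ⟨(Quotient.out ((w : G ⧸ H)))⁻¹ * w, by
    rw [← QuotientGroup.eq_one_iff]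
    simp [QuotientGroup.mk_mul, QuotientGroup.mk_inv, QuotientGroup.out_eq']⟩

lemma SEsig_val (w : G) : (SEsig H w : G) = (Quotient.out ((w : G ⧸ H)))⁻¹ * w := rfl

lemma SE_mk_out_mul (q : G ⧸ H) (h : ↥H) : ((Quotient.out q * h : G) : G ⧸ H) = q := by
  rw [QuotientGroup.mk_mul]
  rw [(QuotientGroup.eq_one_iff (h : G)).mpr h.2, QuotientGroup.out_eq', mul_one]

lemma SEsig_out_mul (q : G ⧸ H) (h : ↥H) : SEsig H (Quotient.out q * h) = h := by
  apply Subtype.ext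
  rw [SEsig_val, SE_mk_out_mul]
  group

variable (H) in
def SEfibEquiv : (G ⧸ H) × ↥H ≃ G where
  toFun s := Quotient.out s.1 * s.2
  invFun w := ((w : G ⧸ H), SEsig H w)
  left_inv s := by
    cases s with
    | mk q h => exact Prod.ext (SE_mk_out_mul q h) (SEsig_out_mul q h)
  right_inv w := by
    simp only [SEsig_val]
    group

-- J map
def SEJ (q : G ⧸ H) (v : lp (fun _ : ↥H => ℝ) 2) : G → ℝ :=
  fun w => if (w : G ⧸ H) = q then v (SEsig H w) else 0

lemma SEJ_memℓp (q : G ⧸ H) (v : lp (fun _ : ↥H => ℝ) 2) : Memℓp (SEJ q v) 2 := by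
  apply memℓp_gen
  have hinj : Function.Injective (fun h : ↥H => Quotient.out q * (h : G)) := by
    intro h1 h2 hh
    simp only at hh
    exact Subtype.ext (mul_left_cancel hh)
  have hsupp : ∀ w ∉ Set.range (fun h : ↥H => Quotient.out q * (h : G)),
      ‖SEJ q v w‖ ^ ((2:ℝ≥0∞)).toReal = 0 := by
    intro w hw
    have : SEJ q v w = 0 := by
      rw [SEJ]
      split_ifs with hmk
      · exfalso
        apply hw
        exact ⟨SEsig H w, show Quotient.out q * (SEsig H w : G) = w by
          rw [SEsig_val, hmk]; group⟩
      · rfl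
    rw [this]
    simp [ENNReal.toReal_ofNat, Real.zero_rpow]
  rw [← hinj.summable_iff hsupp]
  have : (fun h : ↥H => ‖SEJ q v (Quotient.out q * (h:G))‖ ^ ((2:ℝ≥0∞)).toReal)
      = fun h : ↥H => ‖(v : ∀ _ : ↥H, ℝ) h‖ ^ ((2:ℝ≥0∞)).toReal := by
    funext h
    rw [SEJ]
    rw [if_pos (SE_mk_out_mul q h), SEsig_out_mul]
  exact Summable.congr ((lp.memℓp v).summable (by norm_num)) (fun h => (congrFun this h).symm)

def SEJlp (q : G ⧸ H) (v : lp (fun _ : ↥H => ℝ) 2) : lp (fun _ : G => ℝ) 2 :=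
  ⟨SEJ q v, SEJ_memℓp q v⟩

lemma SEJlp_apply (q : G ⧸ H) (v : lp (fun _ : ↥H => ℝ) 2) (w : G) :
    SEJlp q v w = if (w : G ⧸ H) = q then v (SEsig H w) else 0 := rfl

lemma SEJlp_sub (q : G ⧸ H) (u v : lp (fun _ : ↥H => ℝ) 2) :
    SEJlp q (u - v) = SEJlp q u - SEJlp q v := by
  apply Subtype.ext
  funext w
  have : ((SEJlp q u - SEJlp q v : lp (fun _ : G => ℝ) 2) : ∀ _ : G, ℝ) w
      = SEJlp q u w - SEJlp q v w := by
    rw [lp.coeFn_sub]; rfl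
  rw [this]
  simp only [SEJlp_apply, lp.coeFn_sub, Pi.sub_apply]
  split_ifs <;> simp

lemma SEJlp_normsq (q : G ⧸ H) (v : lp (fun _ : ↥H => ℝ) 2) : ‖SEJlp q v‖^2 = ‖v‖^2 := by
  rw [SE_lp_norm_sq, SE_lp_norm_sq]
  have hinj : Function.Injective (fun h : ↥H => Quotient.out q * (h : G)) := by
    intro h1 h2 hh
    simp only at hh
    exact Subtype.ext (mul_left_cancel hh)
  have hsupp : Function.support (fun w => (SEJlp q v w)^2)
      ⊆ Set.range (fun h : ↥H => Quotient.out q * (h : G)) := by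
    intro w hw
    by_contra hr
    apply hw
    have hne : ¬((w : G ⧸ H) = q) := fun hmk => hr ⟨SEsig H w,
      show Quotient.out q * (SEsig H w : G) = w by rw [SEsig_val, hmk]; group⟩
    show (SEJlp q v w)^2 = 0
    rw [SEJlp_apply, if_neg hne]
    norm_num
  rw [← hinj.tsum_eq hsupp]
  congr 1
  funext h
  rw [SEJlp_apply, if_pos (SE_mk_out_mul q h), SEsig_out_mul]

lemma SEJlp_norm (q : G ⧸ H) (v : lp (fun _ : ↥H => ℝ) 2) : ‖SEJlp q v‖ = ‖v‖ := by
  have := SEJlp_normsq q v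
  nlinarith [norm_nonneg (SEJlp q v), norm_nonneg v]

lemma SEJlp_inner (q q' : G ⧸ H) (hne : q ≠ q') (u v : lp (fun _ : ↥H => ℝ) 2) :
    (inner ℝ (SEJlp q u) (SEJlp q' v) : ℝ) = 0 := by
  rw [lp.inner_eq_tsum]
  have : ∀ w : G, (inner ℝ ((SEJlp q u : ∀ _ : G, ℝ) w) ((SEJlp q' v : ∀ _ : G, ℝ) w) : ℝ) = 0 := by
    intro w
    have h1 : SEJlp q u w = 0 ∨ SEJlp q' v w = 0 := by
      rw [SEJlp_apply, SEJlp_apply]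
      by_cases h : (w : G ⧸ H) = q
      · right
        rw [if_neg (fun h' => hne (h.symm.trans h'))]
      · left
        rw [if_neg h]
    rcases h1 with h | h <;> simp [h, RCLike.inner_apply]
  rw [tsum_congr this]
  exact tsum_zero

lemma SE_norm_sq_sum (s : Finset (G ⧸ H)) (c : (G ⧸ H) → ℝ)
    (V : (G ⧸ H) → lp (fun _ : ↥H => ℝ) 2) :
    ‖∑ q ∈ s, c q • SEJlp q (V q)‖^2 = ∑ q ∈ s, (c q)^2 * ‖V q‖^2 := by
  rw [← real_inner_self_eq_norm_sq, sum_inner]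
  refine Finset.sum_congr rfl ?_
  intro q hqs
  rw [inner_sum, Finset.sum_eq_single_of_mem q hqs ?side]
  case side =>
    intro q' hq's hne
    rw [real_inner_smul_left, real_inner_smul_right,
      SEJlp_inner q q' (Ne.symm hne), mul_zero, mul_zero]
  rw [real_inner_smul_left, real_inner_smul_right, real_inner_self_eq_norm_sq, SEJlp_normsq]
  ring

lemma SE_sum_apply (s : Finset (G ⧸ H)) (c : (G ⧸ H) → ℝ)
    (V : (G ⧸ H) → lp (fun _ : ↥H => ℝ) 2) (w : G) :
    ((∑ q ∈ s, c q • SEJlp q (V q) : lp (fun _ : G => ℝ) 2) : ∀ _ : G, ℝ) w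
      = if (w : G ⧸ H) ∈ s then c (w : G ⧸ H) * V (w : G ⧸ H) (SEsig H w) else 0 := by
  rw [lp.coeFn_sum, Finset.sum_apply]
  have : ∀ q ∈ s, ((c q • SEJlp q (V q) : lp (fun _ : G => ℝ) 2) : ∀ _ : G, ℝ) w
      = if (w : G ⧸ H) = q then c q * V q (SEsig H w) else 0 := by
    intro q _
    rw [lp.coeFn_smul, Pi.smul_apply, smul_eq_mul, SEJlp_apply, mul_ite, mul_zero]
  rw [Finset.sum_congr rfl this, Finset.sum_ite_eq]

end fib

end helpers

set_option maxHeartbeats 2000000 in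
/-- Strong embeddability is closed under extensions: if `H ⊴ G` is strongly
embeddable (with the restricted metric) and `G/H` is strongly embeddable (with the
quotient metric), then `G` is strongly embeddable. -/
theorem stronglyEmbeddable_extension (G : Type) [Group G] [Countable G]
    [MetricSpace G] (hleft : LeftInvariantMetric G) (hproper : ProperMetric G)
    (H : Subgroup G) [H.Normal] [MetricSpace (G ⧸ H)]
    (hq : ∀ a b : G, dist (QuotientGroup.mk a : G ⧸ H) (QuotientGroup.mk b) =
      sInf {r : ℝ | ∃ a' b' : G, (QuotientGroup.mk a' : G ⧸ H) = QuotientGroup.mk a ∧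
        (QuotientGroup.mk b' : G ⧸ H) = QuotientGroup.mk b ∧ r = dist a' b'})
    (hH : StronglyEmbeddable H) (hQ : StronglyEmbeddable (G ⧸ H)) :
    StronglyEmbeddable G := by
  classical
  intro R hR ε hε
  have h01 : 0 < min ε 1 := lt_min hε one_pos
  set ε₁ : ℝ := min ε 1 / 8 with hε₁def
  have hε₁ : 0 < ε₁ := by positivity
  have hε₁le : ε₁ ≤ 1/8 := by
    have : min ε 1 ≤ 1 := min_le_right _ _
    rw [hε₁def]; linarith
  have hε₁ε : 8 * ε₁ ≤ ε := by
    have : min ε 1 ≤ ε := min_le_left _ _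
    rw [hε₁def]; linarith
  obtain ⟨βQ, q1, q2, q3⟩ := hQ R hR ε₁ hε₁
  obtain ⟨S₀', hS₀'⟩ := q3 (ε₁^2) (by positivity)
  set S₀ : ℝ := max S₀' 0 with hS₀def
  have hS₀nn : 0 ≤ S₀ := le_max_right _ _
  have hS₀ : ∀ q : G ⧸ H, (∑' q' : {q' : G ⧸ H // S₀ < dist q q'}, (βQ q q'.1)^2) ≤ ε₁^2 := by
    intro q
    refine le_trans ?_ (hS₀' q)
    exact SE_tsum_subtype_mono (f := fun q' => (βQ q q')^2) (fun _ => sq_nonneg _)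
      (SE_lp_sq_summable _)
      (fun q' hq' => show S₀' < dist q q' from lt_of_le_of_lt (le_max_left S₀' 0) hq')
  set S : ℝ := S₀ + R with hSdef
  have hS0S : S₀ < S := by rw [hSdef]; linarith
  have hSpos : 0 < S := lt_of_le_of_lt hS₀nn hS0S
  set RH : ℝ := 2*R + 2*S + 1 with hRHdef
  have hRHpos : 0 < RH := by rw [hRHdef]; linarith
  obtain ⟨βH, h1, h2, h3⟩ := hH RH hRHpos ε₁ hε₁
  -- the projection to H
  have hmin := fun g : G => SE_exists_min hleft hproper hq g 1
  choose pc hpc1 hpc2 hpc3 using hmin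
  set p : G → ↥H := fun g => ⟨pc g, (QuotientGroup.eq_one_iff _).mp
    (by rw [hpc1 g, QuotientGroup.mk_one])⟩ with hpdef
  have hp_dist : ∀ g : G, dist g (p g : G) = dist (g : G ⧸ H) (1 : G ⧸ H) := by
    intro g
    have hh := hpc2 g
    rw [QuotientGroup.mk_one] at hh
    exact hh.symm
  have hkey : ∀ (x : G) (q : G ⧸ H),
      dist ((Quotient.out q)⁻¹ * x) ((p ((Quotient.out q)⁻¹ * x) : G))
        = dist (x : G ⧸ H) q := by
    intro x q
    rw [hp_dist, SE_dist_aux hleft hq]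
  -- the data
  set A : G → (G ⧸ H) → ℝ :=
    fun x q => if dist (x : G ⧸ H) q ≤ S then βQ (x : G ⧸ H) q else 0 with hAdef
  set U : G → (G ⧸ H) → lp (fun _ : ↥H => ℝ) 2 :=
    fun x q => βH (p ((Quotient.out q)⁻¹ * x)) with hUdef
  set T : G → Finset (G ⧸ H) :=
    fun x => (SE_qball_finite hleft hproper hq x S).toFinset with hTdef
  have hTmem : ∀ x q, q ∈ T x ↔ dist (x : G ⧸ H) q ≤ S := by
    intro x q
    rw [hTdef]
    exact Set.Finite.mem_toFinset _
  set B : G → lp (fun _ : G => ℝ) 2 :=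
    fun x => ∑ q ∈ T x, A x q • SEJlp q (U x q) with hBdef
  have hA0 : ∀ x q, q ∉ T x → A x q = 0 := by
    intro x q hq'
    simp only [hAdef]
    exact if_neg (fun hc => hq' ((hTmem x q).mpr hc))
  have hAsq : ∀ x q, (A x q)^2 ≤ (βQ (x : G ⧸ H) q)^2 := by
    intro x q
    simp only [hAdef]
    split_ifs
    · exact le_rfl
    · simpa using sq_nonneg ((βQ (x : G ⧸ H)) q)
  have hUnorm : ∀ x q, ‖U x q‖ = 1 := by
    intro x q
    simp only [hUdef]
    exact h1 _
  have hQnormsq : ∀ z : G ⧸ H, ∑' q : G ⧸ H, (βQ z q)^2 = 1 := by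
    intro z
    rw [← SE_lp_norm_sq, q1 z]
    norm_num
  have hBsq : ∀ x, ‖B x‖^2 = ∑ q ∈ T x, (A x q)^2 := by
    intro x
    rw [hBdef, SE_norm_sq_sum]
    refine Finset.sum_congr rfl ?_
    intro q _
    rw [hUnorm x q]
    ring
  have hAsum : ∀ (x : G) (s : Finset (G ⧸ H)), ∑ q ∈ s, (A x q)^2 ≤ 1 := by
    intro x s
    refine le_trans (Finset.sum_le_sum (fun q _ => hAsq x q)) ?_
    rw [← hQnormsq (x : G ⧸ H)]
    exact Summable.sum_le_tsum s (fun q _ => sq_nonneg _) (SE_lp_sq_summable _)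
  have hBlb : ∀ x, 1 - ε₁^2 ≤ ‖B x‖^2 := by
    intro x
    rw [hBsq x]
    have heq : ∀ q ∈ T x, (A x q)^2 = (βQ (x : G ⧸ H) q)^2 := by
      intro q hq'
      simp only [hAdef]
      rw [if_pos ((hTmem x q).mp hq')]
    rw [Finset.sum_congr rfl heq]
    have hsplit := Summable.sum_add_tsum_compl (s := T x) (SE_lp_sq_summable (βQ (x : G ⧸ H)))
    have htail : (∑' q' : ↑((↑(T x) : Set (G ⧸ H))ᶜ), (βQ (x : G ⧸ H) q'.1)^2) ≤ ε₁^2 := by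
      refine le_trans ?_ (hS₀ (x : G ⧸ H))
      refine SE_tsum_subtype_mono (fun _ => sq_nonneg _) (SE_lp_sq_summable _) ?_
      intro q' hq'
      show S₀ < dist (x : G ⧸ H) q'
      have hnle : ¬ dist (x : G ⧸ H) q' ≤ S :=
        fun hc => hq' (Finset.mem_coe.mpr ((hTmem x q').mpr hc))
      linarith [not_le.mp hnle]
    have htot := hQnormsq (x : G ⧸ H)
    linarith [hsplit, htail]
  have hBpos : ∀ x, 3/4 ≤ ‖B x‖ := by
    intro x
    refine SE_le_of_sq_le_sq (by norm_num) (norm_nonneg _) ?_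
    have := hBlb x
    nlinarith [hε₁le, hε₁]
  have hBne : ∀ x, 0 < ‖B x‖ := fun x => lt_of_lt_of_le (by norm_num) (hBpos x)
  refine ⟨fun x => ‖B x‖⁻¹ • B x, ?_, ?_, ?_⟩
  · intro x
    rw [norm_smul, Real.norm_eq_abs, abs_of_pos (inv_pos.mpr (hBne x)),
      inv_mul_cancel₀ (ne_of_gt (hBne x))]
  · -- variation
    intro x y hxy
    have hQxy : dist (x : G ⧸ H) (y : G ⧸ H) ≤ R :=
      le_trans (SE_dist_mk_le hleft hproper hq x y) hxy
    set s : Finset (G ⧸ H) := T x ∪ T y with hsdef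
    have hBx : B x = ∑ q ∈ s, A x q • SEJlp q (U x q) := by
      simp only [hBdef]
      exact Finset.sum_subset Finset.subset_union_left
        (fun q _ hq' => by rw [hA0 x q hq', zero_smul])
    have hBy : B y = ∑ q ∈ s, A y q • SEJlp q (U y q) := by
      simp only [hBdef]
      exact Finset.sum_subset Finset.subset_union_right
        (fun q _ hq' => by rw [hA0 y q hq', zero_smul])
    set c1 : (G ⧸ H) → ℝ := fun q =>
      if dist (x : G ⧸ H) q ≤ S then βQ (x : G ⧸ H) q - βQ (y : G ⧸ H) q else 0 with hc1def
    set c2 : (G ⧸ H) → ℝ := fun q =>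
      (if dist (x : G ⧸ H) q ≤ S then βQ (y : G ⧸ H) q else 0) - A y q with hc2def
    set M1 := ∑ q ∈ s, c1 q • SEJlp q (U x q) with hM1def
    set M2 := ∑ q ∈ s, c2 q • SEJlp q (U x q) with hM2def
    set M3 := ∑ q ∈ s, A y q • SEJlp q (U x q - U y q) with hM3def
    have hdecomp : B x - B y = M1 + M2 + M3 := by
      rw [hBx, hBy, hM1def, hM2def, hM3def, ← Finset.sum_sub_distrib,
        ← Finset.sum_add_distrib, ← Finset.sum_add_distrib]
      refine Finset.sum_congr rfl ?_
      intro q _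
      have hc : c1 q + c2 q + A y q = A x q := by
        simp only [hc1def, hc2def, hAdef]
        split_ifs <;> ring
      have e1 : ∀ (X Y : lp (fun _ : G => ℝ) 2),
          c1 q • X + c2 q • X + A y q • (X - Y) = (c1 q + c2 q + A y q) • X - A y q • Y := by
        intro X Y
        rw [add_smul, add_smul, smul_sub]
        abel
      rw [SEJlp_sub, e1, hc]
    have hM1n : ‖M1‖ ≤ ε₁ := by
      refine SE_le_of_sq_le_sq (norm_nonneg _) (le_of_lt hε₁) ?_
      rw [hM1def, SE_norm_sq_sum]
      have hb : ∀ q ∈ s, (c1 q)^2 * ‖U x q‖^2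
          ≤ ((βQ (x : G ⧸ H) - βQ (y : G ⧸ H)) q)^2 := by
        intro q _
        rw [hUnorm x q, one_pow, mul_one]
        simp only [lp.coeFn_sub, Pi.sub_apply]
        simp only [hc1def]
        split_ifs
        · exact le_rfl
        · simpa using sq_nonneg (βQ (x : G ⧸ H) q - βQ (y : G ⧸ H) q)
      refine le_trans (Finset.sum_le_sum hb) ?_
      refine le_trans (Summable.sum_le_tsum s (fun q _ => sq_nonneg _) (SE_lp_sq_summable _)) ?_
      rw [← SE_lp_norm_sq]
      have hq2 := q2 _ _ hQxy
      nlinarith [norm_nonneg (βQ (x : G ⧸ H) - βQ (y : G ⧸ H))]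
    have hM2n : ‖M2‖ ≤ ε₁ := by
      refine SE_le_of_sq_le_sq (norm_nonneg _) (le_of_lt hε₁) ?_
      rw [hM2def, SE_norm_sq_sum]
      have hb : ∀ q ∈ s, (c2 q)^2 * ‖U x q‖^2
          ≤ ({q' : G ⧸ H | S₀ < dist (y : G ⧸ H) q'}).indicator
              (fun q' => (βQ (y : G ⧸ H) q')^2) q := by
        intro q _
        rw [hUnorm x q, one_pow, mul_one]
        have hindnn : (0:ℝ) ≤ ({q' : G ⧸ H | S₀ < dist (y : G ⧸ H) q'}).indicator
            (fun q' => (βQ (y : G ⧸ H) q')^2) q :=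
          Set.indicator_nonneg (fun _ _ => sq_nonneg _) q
        simp only [hc2def, hAdef]
        by_cases h1' : dist (x : G ⧸ H) q ≤ S
        · by_cases h2' : dist (y : G ⧸ H) q ≤ S
          · rw [if_pos h1', if_pos h2']
            simpa using hindnn
          · rw [if_pos h1', if_neg h2']
            have hmem : q ∈ {q' : G ⧸ H | S₀ < dist (y : G ⧸ H) q'} :=
              lt_trans hS0S (not_le.mp h2')
            rw [Set.indicator_of_mem hmem]
            simp
        · by_cases h2' : dist (y : G ⧸ H) q ≤ S
          · rw [if_neg h1', if_pos h2']
            have habs := abs_dist_sub_le (x : G ⧸ H) (y : G ⧸ H) q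
            have hgt := not_le.mp h1'
            have hmem : q ∈ {q' : G ⧸ H | S₀ < dist (y : G ⧸ H) q'} := by
              show S₀ < dist (y : G ⧸ H) q
              have h4 : |dist (x : G ⧸ H) q - dist (y : G ⧸ H) q| ≤ dist (x : G ⧸ H) (y : G ⧸ H) := habs
              have h5 := abs_le.mp h4
              rw [hSdef] at hgt
              linarith [h5.1, h5.2]
            rw [Set.indicator_of_mem hmem]
            have : (0 - βQ (y : G ⧸ H) q)^2 = (βQ (y : G ⧸ H) q)^2 := by ring
            rw [this]
          · rw [if_neg h1', if_neg h2']
            simpa using hindnn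
      refine le_trans (Finset.sum_le_sum hb) ?_
      refine le_trans (Summable.sum_le_tsum s
        (fun q _ => Set.indicator_nonneg (fun _ _ => sq_nonneg _) q)
        ((SE_lp_sq_summable (βQ (y : G ⧸ H))).indicator _)) ?_
      rw [← tsum_subtype]
      exact hS₀ (y : G ⧸ H)
    have hM3n : ‖M3‖ ≤ ε₁ := by
      refine SE_le_of_sq_le_sq (norm_nonneg _) (le_of_lt hε₁) ?_
      rw [hM3def, SE_norm_sq_sum]
      have hb : ∀ q ∈ s, (A y q)^2 * ‖U x q - U y q‖^2 ≤ (A y q)^2 * ε₁^2 := by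
        intro q _
        by_cases h2' : dist (y : G ⧸ H) q ≤ S
        · have hdxq : dist (x : G ⧸ H) q ≤ S + R := by
            have h3' := dist_triangle (x : G ⧸ H) (y : G ⧸ H) q
            linarith
          have hUdist : dist (p ((Quotient.out q)⁻¹ * x)) (p ((Quotient.out q)⁻¹ * y)) ≤ RH := by
            rw [Subtype.dist_eq]
            have hcx : dist ((p ((Quotient.out q)⁻¹ * x)) : G) ((Quotient.out q)⁻¹ * x)
                = dist (x : G ⧸ H) q := by rw [dist_comm]; exact hkey x q
            have hcy : dist ((Quotient.out q)⁻¹ * y) ((p ((Quotient.out q)⁻¹ * y)) : G)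
                = dist (y : G ⧸ H) q := hkey y q
            have t3 : dist ((Quotient.out q)⁻¹ * x) ((Quotient.out q)⁻¹ * y) = dist x y :=
              hleft (Quotient.out q)⁻¹ x y
            have t4 := dist_triangle4 ((p ((Quotient.out q)⁻¹ * x)) : G)
              ((Quotient.out q)⁻¹ * x) ((Quotient.out q)⁻¹ * y)
              ((p ((Quotient.out q)⁻¹ * y)) : G)
            rw [hRHdef]
            linarith
          have hUb := h2 _ _ hUdist
          have hUU : U x q - U y q
              = βH (p ((Quotient.out q)⁻¹ * x)) - βH (p ((Quotient.out q)⁻¹ * y)) := by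
            simp only [hUdef]
          rw [hUU]
          have hsq : ‖βH (p ((Quotient.out q)⁻¹ * x)) - βH (p ((Quotient.out q)⁻¹ * y))‖^2
              ≤ ε₁^2 := by
            nlinarith [norm_nonneg (βH (p ((Quotient.out q)⁻¹ * x))
              - βH (p ((Quotient.out q)⁻¹ * y)))]
          exact mul_le_mul_of_nonneg_left hsq (sq_nonneg (A y q))
        · have hz : A y q = 0 := by simp only [hAdef]; exact if_neg h2'
          rw [hz]
          norm_num
      refine le_trans (Finset.sum_le_sum hb) ?_
      rw [← Finset.sum_mul]
      have hA1 := hAsum y s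
      nlinarith [sq_nonneg ε₁,
        Finset.sum_nonneg (fun q (_ : q ∈ s) => sq_nonneg (A y q))]
    have hBdiff : ‖B x - B y‖ ≤ 3 * ε₁ := by
      rw [hdecomp]
      calc ‖M1 + M2 + M3‖ ≤ ‖M1 + M2‖ + ‖M3‖ := norm_add_le _ _
        _ ≤ ‖M1‖ + ‖M2‖ + ‖M3‖ := by linarith [norm_add_le M1 M2]
        _ ≤ 3 * ε₁ := by linarith
    have hnorm := SE_norm_normalize_sub (B x) (B y) (hBne x) (hBne y)
    have hinv : ‖B x‖⁻¹ ≤ 4/3 := by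
      rw [show (4:ℝ)/3 = ((3:ℝ)/4)⁻¹ by norm_num]
      exact inv_anti₀ (by norm_num) (hBpos x)
    calc ‖‖B x‖⁻¹ • B x - ‖B y‖⁻¹ • B y‖ ≤ 2 * ‖B x - B y‖ / ‖B x‖ := hnorm
      _ = 2 * ‖B x - B y‖ * ‖B x‖⁻¹ := by rw [div_eq_mul_inv]
      _ ≤ 2 * (3*ε₁) * (4/3) := by
          have h2' : (0:ℝ) ≤ ‖B x - B y‖ := norm_nonneg _
          have h3' : (0:ℝ) ≤ ‖B x‖⁻¹ := by positivity
          nlinarith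
      _ = 8 * ε₁ := by ring
      _ ≤ ε := hε₁ε
  · -- decay
    intro δ hδ
    obtain ⟨T₀, hT₀⟩ := h3 (δ/2) (by positivity)
    refine ⟨S + T₀ + 1, ?_⟩
    intro x
    have hsum : Summable (fun w : G => ((B x) w : ℝ)^2) := SE_lp_sq_summable (B x)
    set s' : Set G := {w : G | S + T₀ + 1 < dist x w} with hs'def
    have hindsum : Summable (s'.indicator (fun w => ((B x) w : ℝ)^2)) := hsum.indicator s'
    have happ : ∀ w : G, ((B x) w : ℝ)
        = if (w : G ⧸ H) ∈ T x then A x (w : G ⧸ H) * U x (w : G ⧸ H) (SEsig H w) else 0 := by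
      intro w
      simp only [hBdef]
      exact SE_sum_apply (T x) (A x) (U x) w
    have hmain : (∑' w : s', ((B x) w.1 : ℝ)^2) ≤ δ/2 := by
      rw [tsum_subtype s' (fun w => ((B x) w : ℝ)^2)]
      have hnn : ∀ w : G, 0 ≤ s'.indicator (fun w => ((B x) w : ℝ)^2) w :=
        fun w => Set.indicator_nonneg (fun _ _ => sq_nonneg _) w
      rw [← ENNReal.ofReal_le_ofReal_iff (by positivity : (0:ℝ) ≤ δ/2)]
      rw [ENNReal.ofReal_tsum_of_nonneg hnn hindsum]
      rw [← Equiv.tsum_eq (SEfibEquiv H)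
        (fun w => ENNReal.ofReal (s'.indicator (fun w' => ((B x) w' : ℝ)^2) w))]
      rw [ENNReal.tsum_prod']
      have hq_bound : ∀ q : G ⧸ H,
          (∑' h : ↥H, ENNReal.ofReal (s'.indicator (fun w' => ((B x) w' : ℝ)^2)
            (SEfibEquiv H (q, h))))
          ≤ ENNReal.ofReal ((A x q)^2) * ENNReal.ofReal (δ/2) := by
        intro q
        by_cases hqT : q ∈ T x
        · have hpt : ∀ h : ↥H,
              ENNReal.ofReal (s'.indicator (fun w' => ((B x) w' : ℝ)^2) (SEfibEquiv H (q, h)))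
              ≤ ENNReal.ofReal ((A x q)^2) * ENNReal.ofReal
                  (if T₀ < dist (p ((Quotient.out q)⁻¹ * x)) h
                    then ((βH (p ((Quotient.out q)⁻¹ * x))) h : ℝ)^2 else 0) := by
            intro h
            have hew : SEfibEquiv H (q, h) = Quotient.out q * (h : G) := rfl
            rw [hew]
            have hmkw : ((Quotient.out q * (h : G) : G) : G ⧸ H) = q := SE_mk_out_mul q h
            have hBxw : ((B x) (Quotient.out q * (h : G)) : ℝ) = A x q * U x q h := by
              rw [happ, hmkw, SEsig_out_mul, if_pos hqT]
            by_cases hws : Quotient.out q * (h : G) ∈ s'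
            · have hws' : S + T₀ + 1 < dist x (Quotient.out q * (h : G)) := hws
              have hdist : T₀ < dist (p ((Quotient.out q)⁻¹ * x)) h := by
                rw [Subtype.dist_eq]
                have hxw : dist x (Quotient.out q * (h : G))
                    = dist ((Quotient.out q)⁻¹ * x) (h : G) := by
                  calc dist x (Quotient.out q * (h : G))
                      = dist ((Quotient.out q)⁻¹ * x)
                          ((Quotient.out q)⁻¹ * (Quotient.out q * (h : G))) :=
                        (hleft (Quotient.out q)⁻¹ x _).symm
                    _ = dist ((Quotient.out q)⁻¹ * x) (h : G) := by
                        rw [show (Quotient.out q)⁻¹ * (Quotient.out q * (h : G)) = (h : G) by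
                          group]
                have hnp : dist ((Quotient.out q)⁻¹ * x)
                    ((p ((Quotient.out q)⁻¹ * x)) : G) ≤ S := by
                  rw [hkey x q]
                  exact (hTmem x q).mp hqT
                have htr := dist_triangle ((Quotient.out q)⁻¹ * x)
                  ((p ((Quotient.out q)⁻¹ * x)) : G) (h : G)
                linarith
              rw [Set.indicator_of_mem hws, hBxw, if_pos hdist, mul_pow,
                ENNReal.ofReal_mul (sq_nonneg _)]
            · rw [Set.indicator_of_notMem hws]
              simp
          refine le_trans (ENNReal.tsum_le_tsum hpt) ?_
          rw [ENNReal.tsum_mul_left]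
          refine mul_le_mul_right ?_ _
          have hnn2 : ∀ h : ↥H, 0 ≤ (if T₀ < dist (p ((Quotient.out q)⁻¹ * x)) h
              then ((βH (p ((Quotient.out q)⁻¹ * x))) h : ℝ)^2 else 0) := by
            intro h
            split_ifs
            · exact sq_nonneg _
            · exact le_rfl
          have hsum2 : Summable (fun h : ↥H => if T₀ < dist (p ((Quotient.out q)⁻¹ * x)) h
              then ((βH (p ((Quotient.out q)⁻¹ * x))) h : ℝ)^2 else 0) := by
            have hi := (SE_lp_sq_summable (βH (p ((Quotient.out q)⁻¹ * x)))).indicator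
              {h : ↥H | T₀ < dist (p ((Quotient.out q)⁻¹ * x)) h}
            refine hi.congr (fun h => ?_)
            rw [Set.indicator_apply]
            simp [Set.mem_setOf_eq]
          rw [← ENNReal.ofReal_tsum_of_nonneg hnn2 hsum2]
          apply ENNReal.ofReal_le_ofReal
          calc ∑' h : ↥H, (if T₀ < dist (p ((Quotient.out q)⁻¹ * x)) h
                then ((βH (p ((Quotient.out q)⁻¹ * x))) h : ℝ)^2 else 0)
              = ∑' h : ↥H, ({h' : ↥H | T₀ < dist (p ((Quotient.out q)⁻¹ * x)) h'}).indicator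
                  (fun h' => ((βH (p ((Quotient.out q)⁻¹ * x))) h' : ℝ)^2) h := by
                refine tsum_congr (fun h => ?_)
                rw [Set.indicator_apply]
                simp [Set.mem_setOf_eq]
            _ = ∑' (w : {h' : ↥H // T₀ < dist (p ((Quotient.out q)⁻¹ * x)) h'}),
                  ((βH (p ((Quotient.out q)⁻¹ * x))) w.1 : ℝ)^2 :=
                (tsum_subtype _ _).symm
            _ ≤ δ/2 := hT₀ _
        · have hzero : ∀ h : ↥H,
              ENNReal.ofReal (s'.indicator (fun w' => ((B x) w' : ℝ)^2) (SEfibEquiv H (q, h)))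
              = 0 := by
            intro h
            have hew : SEfibEquiv H (q, h) = Quotient.out q * (h : G) := rfl
            rw [hew]
            have hmkw : ((Quotient.out q * (h : G) : G) : G ⧸ H) = q := SE_mk_out_mul q h
            have hBw : ((B x) (Quotient.out q * (h : G)) : ℝ) = 0 := by
              rw [happ, hmkw, if_neg hqT]
            have hind : s'.indicator (fun w' => ((B x) w' : ℝ)^2) (Quotient.out q * (h : G))
                = 0 := by
              rw [Set.indicator_apply]
              split_ifs
              · rw [hBw]; norm_num
              · rfl
            rw [hind]
            simp
          rw [tsum_congr hzero]
          simp
      refine le_trans (ENNReal.tsum_le_tsum hq_bound) ?_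
      rw [ENNReal.tsum_mul_right]
      have hle1 : (∑' q : G ⧸ H, ENNReal.ofReal ((A x q)^2)) ≤ 1 := by
        rw [tsum_eq_sum (s := T x) (fun q hq' => by rw [hA0 x q hq']; simp)]
        rw [← ENNReal.ofReal_sum_of_nonneg (fun q _ => sq_nonneg _)]
        refine le_trans (ENNReal.ofReal_le_ofReal (hAsum x (T x))) ?_
        simp
      calc (∑' q : G ⧸ H, ENNReal.ofReal ((A x q)^2)) * ENNReal.ofReal (δ/2)
          ≤ 1 * ENNReal.ofReal (δ/2) := mul_le_mul_left hle1 _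
        _ = ENNReal.ofReal (δ/2) := one_mul _
    have hfinal : ∀ w : {w : G // S + T₀ + 1 < dist x w},
        (((‖B x‖⁻¹ • B x : lp (fun _ : G => ℝ) 2)) w.1 : ℝ)^2
          = (‖B x‖⁻¹)^2 * ((B x) w.1 : ℝ)^2 := by
      intro w
      have : ((‖B x‖⁻¹ • B x : lp (fun _ : G => ℝ) 2) : ∀ _ : G, ℝ) w.1
          = ‖B x‖⁻¹ * ((B x) w.1 : ℝ) := by
        rw [lp.coeFn_smul]
        rfl
      rw [this]
      ring
    rw [tsum_congr hfinal, tsum_mul_left]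
    have hfac : (‖B x‖⁻¹)^2 ≤ 2 := by
      have hb := hBpos x
      have h9 : (9:ℝ)/16 ≤ ‖B x‖^2 := by nlinarith
      rw [inv_pow]
      have h10 := inv_anti₀ (show (0:ℝ) < 9/16 by norm_num) h9
      rw [show ((9:ℝ)/16)⁻¹ = 16/9 by norm_num] at h10
      linarith
    have htsnn : 0 ≤ ∑' w : {w : G // S + T₀ + 1 < dist x w}, ((B x) w.1 : ℝ)^2 :=
      tsum_nonneg (fun w => sq_nonneg _)
    calc (‖B x‖⁻¹)^2 * (∑' w : {w : G // S + T₀ + 1 < dist x w}, ((B x) w.1 : ℝ)^2)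
        ≤ 2 * (δ/2) := mul_le_mul hfac hmain htsnn (by norm_num)
      _ = δ := by ring

end
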